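/- For d \ge 1 and n \ge d+1, the maximum weight of a permutation of length n with d descents is d(n-d-1); in particular, for any permutation \sigma \in S_n with des(\sigma) = d, w(\sigma) \le d(n-d-1). -/

import Mathlib

/-- A rooted tree with natural-number labels. -/
inductive RTree : Type
  | node : ℕ → List RTree → RTree
deriving Repr

namespace RTree

/-- Number of leaves of a rooted tree (a node with no children is a leaf). -/
def leafCount : RTree → ℕ
  | .node _ cs =>
    if cs.isEmpty then 1 else (cs.attach.map fun c => leafCount c.1).sum
decreasing_by
  have := List.sizeOf_lt_of_mem c.2
  simp only [RTree.node.sizeOf_spec]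
  omega

/-- The list of labels of the leaves of a rooted tree. -/
def leafVals : RTree → List ℕ
  | .node v cs =>
    if cs.isEmpty then [v] else (cs.attach.map fun c => leafVals c.1).flatten
decreasing_by
  have := List.sizeOf_lt_of_mem c.2
  simp only [RTree.node.sizeOf_spec]
  omega

/-- The sum, over all internal (non-leaf) nodes `v`, of the number of leaves in the
subtree of `v`. -/
def incidenceSum : RTree → ℕ
  | .node v cs =>
    if cs.isEmpty then 0
    else leafCount (.node v cs) + (cs.attach.map fun c => incidenceSum c.1).sum
decreasing_by
  have := List.sizeOf_lt_of_mem c.2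
  simp only [RTree.node.sizeOf_spec]
  omega

end RTree

/-- Split a word into blocks by repeatedly cutting just after the (first occurrence of
the) global maximum of the remaining word, as in the maximum-weight tree construction. -/
def maxSplit : ℕ → List ℕ → List (List ℕ)
  | 0, _ => []
  | _, [] => []
  | fuel + 1, l =>
    let i := l.idxOf (l.foldr max 0)
    l.take (i + 1) :: maxSplit fuel (l.drop (i + 1))

/-- Build the minimum decomposition tree of a word: the root is the minimum `m`; the
word splits as `π₁ ⋯ π_L · m · π_R`, where the `πᵢ` are the blocks of the left part
cut at successive global maxima; the children of `m` are the trees of the `πᵢ` and of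
`π_R`. -/
def minDecomp : ℕ → List ℕ → RTree
  | 0, _ => .node 0 []
  | fuel + 1, l =>
    let m := l.foldr min (l.headD 0)
    let i := l.idxOf m
    let left := l.take i
    let right := l.drop (i + 1)
    .node m
      (((maxSplit left.length left).map (minDecomp fuel))
        ++ (if right.isEmpty then [] else [minDecomp fuel right]))

/-- The word of a permutation `σ ∈ Sₙ` (values in `{1,…,n}`) with `n+1` appended. -/
def permWord {n : ℕ} (σ : Equiv.Perm (Fin n)) : List ℕ :=
  (List.ofFn fun i => (σ i : ℕ) + 1) ++ [n + 1]

/-- The minimum decomposition tree of a permutation. -/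
def permTree {n : ℕ} (σ : Equiv.Perm (Fin n)) : RTree :=
  minDecomp (permWord σ).length (permWord σ)

/-- The weight of a permutation `σ ∈ Sₙ` (Corollary 3.3): the sum over the non-descent
nodes of the number of descents (leaves) in their subtree of its maximum-weight maxmin
tree, minus `n`. -/
def permWeight {n : ℕ} (σ : Equiv.Perm (Fin n)) : ℕ :=
  RTree.incidenceSum (permTree σ) - n

/-- The number of descents of a permutation. -/
def numDescents {n : ℕ} (σ : Equiv.Perm (Fin n)) : ℕ :=
  (Finset.univ.filter fun i : Fin n =>
    ∃ h : (i : ℕ) + 1 < n, σ ⟨(i : ℕ) + 1, h⟩ < σ i).card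

-- ===== auxiliary development =====
namespace RTree

def nodeCount : RTree → ℕ
  | .node _ cs => 1 + (cs.attach.map fun c => nodeCount c.1).sum
decreasing_by
  have := List.sizeOf_lt_of_mem c.2
  simp only [RTree.node.sizeOf_spec]
  omega

lemma attach_sum (cs : List RTree) (f : RTree → ℕ) :
    (cs.attach.map fun c => f c.1).sum = (cs.map f).sum := by
  simp [List.attach_map_val]

lemma leafCount_node (v : ℕ) (cs : List RTree) :
    leafCount (.node v cs) = if cs.isEmpty then 1 else (cs.map leafCount).sum := by
  rw [leafCount, attach_sum]

lemma incidenceSum_node (v : ℕ) (cs : List RTree) :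
    incidenceSum (.node v cs) = if cs.isEmpty then 0
      else leafCount (.node v cs) + (cs.map incidenceSum).sum := by
  rw [incidenceSum, attach_sum]

lemma nodeCount_node (v : ℕ) (cs : List RTree) :
    nodeCount (.node v cs) = 1 + (cs.map nodeCount).sum := by
  rw [nodeCount, attach_sum]

def Facts (T : RTree) : Prop :=
  1 ≤ leafCount T ∧ leafCount T ≤ nodeCount T ∧
    incidenceSum T + leafCount T * leafCount T ≤ nodeCount T * leafCount T

lemma sum_facts (L : ℕ) (cs : List RTree) (h : ∀ c ∈ cs, Facts c)
    (hL : ∀ c ∈ cs, leafCount c ≤ L) :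
    (cs.map leafCount).sum ≤ (cs.map nodeCount).sum ∧
    (cs.map incidenceSum).sum + (cs.map leafCount).sum * L ≤ (cs.map nodeCount).sum * L := by
  induction cs with
  | nil => simp
  | cons c cs ih =>
    obtain ⟨h1, h2, h3⟩ := h c (by simp)
    have hcL := hL c (by simp)
    obtain ⟨ih1, ih2⟩ := ih (fun x hx => h x (by simp [hx])) (fun x hx => hL x (by simp [hx]))
    simp only [List.map_cons, List.sum_cons]
    constructor
    · omega
    · have key : incidenceSum c + leafCount c * L ≤ nodeCount c * L := by
        obtain ⟨a, ha⟩ := Nat.le.dest h2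
        obtain ⟨b, hb⟩ := Nat.le.dest hcL
        rw [← ha, ← hb]
        rw [← ha] at h3
        nlinarith
      nlinarith

lemma facts_all : ∀ N T, sizeOf T ≤ N → Facts T := by
  intro N
  induction N with
  | zero => intro T hT; cases T with | node v cs => simp at hT
  | succ N ih =>
    intro T hT
    cases T with
    | node v cs =>
      by_cases hcs : cs.isEmpty
      · refine ⟨?_, ?_, ?_⟩ <;>
          simp [leafCount_node, incidenceSum_node, nodeCount_node, hcs]
      · have hfacts : ∀ c ∈ cs, Facts c := by
          intro c hc
          apply ih
          have := List.sizeOf_lt_of_mem hc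
          simp only [RTree.node.sizeOf_spec] at hT
          omega
        have hne : cs ≠ [] := by simpa [List.isEmpty_iff] using hcs
        set L : ℕ := (cs.map leafCount).sum with hLdef
        have hL : ∀ c ∈ cs, leafCount c ≤ L := by
          intro c hc
          have : leafCount c ∈ cs.map leafCount := List.mem_map_of_mem hc
          exact List.single_le_sum (by simp) _ this
        obtain ⟨s1, s2⟩ := sum_facts L cs hfacts hL
        have hL1 : 1 ≤ L := by
          obtain ⟨c, hc⟩ := List.exists_mem_of_ne_nil cs hne
          have := (hfacts c hc).1
          have := hL c hc
          have : leafCount c ∈ cs.map leafCount := List.mem_map_of_mem hc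
          calc 1 ≤ leafCount c := (hfacts c hc).1
            _ ≤ L := hL c hc
        refine ⟨?_, ?_, ?_⟩
        · simpa [leafCount_node, hcs] using hL1
        · simp only [leafCount_node, nodeCount_node, hcs, Bool.false_eq_true, if_false]
          omega
        · simp only [leafCount_node, incidenceSum_node, nodeCount_node, hcs, Bool.false_eq_true, if_false]
          rw [← hLdef]
          rw [← hLdef] at s2
          nlinarith

lemma tree_facts (T : RTree) : Facts T := facts_all (sizeOf T) T le_rfl

end RTree


def des : List ℕ → ℕ
  | [] => 0
  | [_] => 0
  | a :: b :: t => (if b < a then 1 else 0) + des (b :: t)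

lemma des_nil : des [] = 0 := rfl
lemma des_single (a : ℕ) : des [a] = 0 := rfl
lemma des_cons_cons (a b : ℕ) (t : List ℕ) :
    des (a :: b :: t) = (if b < a then 1 else 0) + des (b :: t) := rfl

lemma des_append (a b : List ℕ) (ha : a ≠ []) (hb : b ≠ []) :
    des (a ++ b) = des a + (if b.head! < a.getLast! then 1 else 0) + des b := by
  induction a with
  | nil => simp at ha
  | cons x t ih =>
    cases t with
    | nil =>
      cases b with
      | nil => simp at hb
      | cons y s => simp [des_cons_cons, des_single, List.getLast!]; rfl
    | cons y s =>
      have h1 : (y :: s) ++ b = y :: (s ++ b) := rfl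
      have h2 : ((x :: y :: s) ++ b) = x :: ((y :: s) ++ b) := rfl
      rw [h2, h1, des_cons_cons, ← h1, ih (by simp), des_cons_cons]
      have : (x :: y :: s).getLast! = (y :: s).getLast! := by
        simp [List.getLast!, List.getLast]
      rw [this]
      omega

/-- foldr min facts -/
lemma foldr_min_le (l : List ℕ) (a : ℕ) : ∀ x ∈ l, l.foldr min a ≤ x := by
  induction l with
  | nil => simp
  | cons y t ih =>
    intro x hx
    simp only [List.foldr_cons]
    rcases List.mem_cons.1 hx with h | h
    · subst h; exact min_le_left _ _
    · exact le_trans (min_le_right _ _) (ih x h)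

lemma foldr_min_le_init (l : List ℕ) (a : ℕ) : l.foldr min a ≤ a := by
  induction l with
  | nil => simp
  | cons y t ih => exact le_trans (min_le_right _ _) ih

lemma foldr_min_mem (l : List ℕ) (a : ℕ) : l.foldr min a = a ∨ l.foldr min a ∈ l := by
  induction l with
  | nil => simp
  | cons y t ih =>
    simp only [List.foldr_cons]
    rcases min_choice y (t.foldr min a) with h | h
    · right; rw [h]; exact List.mem_cons_self
    · rw [h]; rcases ih with h' | h'
      · left; exact h'
      · right; exact List.mem_cons_of_mem _ h'

lemma foldr_max_ge (l : List ℕ) : ∀ x ∈ l, x ≤ l.foldr max 0 := by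
  induction l with
  | nil => simp
  | cons y t ih =>
    intro x hx
    simp only [List.foldr_cons]
    rcases List.mem_cons.1 hx with h | h
    · subst h; exact le_max_left _ _
    · exact le_trans (ih x h) (le_max_right _ _)

lemma foldr_max_mem (l : List ℕ) (hl : l ≠ []) : l.foldr max 0 ∈ l := by
  induction l with
  | nil => simp at hl
  | cons y t ih =>
    simp only [List.foldr_cons]
    rcases max_choice y (t.foldr max 0) with h | h
    · rw [h]; exact List.mem_cons_self
    · rw [h]
      rcases eq_or_ne t [] with ht | ht
      · subst ht
        simp only [List.foldr_nil] at h ⊢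
        have hy : y ≤ 0 := max_eq_right_iff.mp h
        simp only [List.mem_singleton]
        omega
      · exact List.mem_cons_of_mem _ (ih ht)

lemma maxSplit_nil (f : ℕ) : maxSplit f [] = [] := by cases f <;> rfl

lemma maxSplit_cons (f : ℕ) (x : ℕ) (t : List ℕ) :
    maxSplit (f + 1) (x :: t) =
      (x :: t).take ((x :: t).idxOf ((x :: t).foldr max 0) + 1) ::
        maxSplit f ((x :: t).drop ((x :: t).idxOf ((x :: t).foldr max 0) + 1)) := rfl

lemma getLast!_cons_cons (y z : ℕ) (s : List ℕ) :
    (y :: z :: s).getLast! = (z :: s).getLast! := by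
  simp [List.getLast!, List.getLast]

lemma getLast!_append_singleton (a : List ℕ) (x : ℕ) : (a ++ [x]).getLast! = x := by
  induction a with
  | nil => rfl
  | cons y t ih =>
    cases t with
    | nil => rfl
    | cons z s =>
      simp only [List.cons_append] at ih ⊢
      rw [getLast!_cons_cons]
      simpa using ih


lemma head!_mem (l : List ℕ) (hl : l ≠ []) : l.head! ∈ l := by
  cases l with
  | nil => simp at hl
  | cons x t => simp [List.head!]

lemma maxSplit_spec : ∀ fuel l, l ≠ [] → l.Nodup → l.length ≤ fuel →
    (maxSplit fuel l).flatten = l ∧ maxSplit fuel l ≠ [] ∧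
    (∀ b ∈ maxSplit fuel l, b ≠ [] ∧ (∀ x ∈ b, x ≤ b.getLast!)) ∧
    des l + 1 = ((maxSplit fuel l).map des).sum + (maxSplit fuel l).length := by
  intro fuel
  induction fuel with
  | zero => intro l hl _ hlen; cases l with
      | nil => simp at hl
      | cons x t => simp at hlen
  | succ f ih =>
    intro l hl hnd hlen
    set M := l.foldr max 0 with hM
    have hMmem : M ∈ l := foldr_max_mem l hl
    have hMmax : ∀ x ∈ l, x ≤ M := foldr_max_ge l
    set i := l.idxOf M with hi
    have hilt : i < l.length := List.idxOf_lt_length_iff.2 hMmem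
    have hgetM : l.get ⟨i, hilt⟩ = M := List.idxOf_get hilt
    set b := l.take (i + 1) with hb
    set rest := l.drop (i + 1) with hrest
    have hsplit : maxSplit (f + 1) l = b :: maxSplit f rest := by
      cases l with
      | nil => simp at hl
      | cons x t => rw [maxSplit_cons]
    have hbr : b ++ rest = l := List.take_append_drop _ _
    have hbform : b = l.take i ++ [M] := by
      rw [hb, List.take_succ]
      congr 1
      rw [List.getElem?_eq_getElem hilt]
      simp [← hgetM]
    have hblast : b.getLast! = M := by rw [hbform]; exact getLast!_append_singleton _ _
    have hbne : b ≠ [] := by rw [hbform]; simp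
    have hbmax : ∀ x ∈ b, x ≤ b.getLast! := by
      rw [hblast]
      intro x hx
      exact hMmax x (List.mem_of_mem_take hx)
    have hrlen : rest.length = l.length - (i + 1) := by rw [hrest]; simp
    have hMb : M ∈ b := by rw [hbform]; simp
    have hMrest : M ∉ rest := by
      intro hc
      have hnd' : (b ++ rest).Nodup := hbr ▸ hnd
      exact (List.disjoint_of_nodup_append hnd') hMb hc
    rcases eq_or_ne rest [] with hre | hre
    · have hlb : l = b := by rw [← hbr, hre, List.append_nil]
      rw [hsplit, hre, maxSplit_nil]
      refine ⟨by simp [hlb], by simp, ?_, by simp [hlb]⟩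
      intro c hc
      rw [List.mem_singleton] at hc
      subst hc
      exact ⟨hbne, hbmax⟩
    · have hrnd : rest.Nodup := (List.drop_sublist _ _).nodup hnd
      have hrlen' : rest.length ≤ f := by
        rw [hrlen]; omega
      obtain ⟨ih1, ih2, ih3, ih4⟩ := ih rest hre hrnd hrlen'
      have hbound : (if rest.head! < b.getLast! then 1 else 0) = 1 := by
        rw [hblast, if_pos]
        have h1 : rest.head! ∈ rest := head!_mem rest hre
        have h2 : rest.head! ≤ M := hMmax _ (by rw [← hbr]; exact List.mem_append_right _ h1)
        have h3 : rest.head! ≠ M := fun hc => hMrest (hc ▸ h1)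
        omega
      have hdes : des l = des b + 1 + des rest := by
        rw [← hbr, des_append b rest hbne hre, hbound]
      rw [hsplit]
      refine ⟨by simp [ih1, hbr], by simp, ?_, ?_⟩
      · intro c hc
        rcases List.mem_cons.1 hc with h | h
        · subst h; exact ⟨hbne, hbmax⟩
        · exact ih3 c h
      · simp only [List.map_cons, List.sum_cons, List.length_cons]
        omega


lemma getLast!_mem (l : List ℕ) (hl : l ≠ []) : l.getLast! ∈ l := by
  induction l with
  | nil => simp at hl
  | cons x t ih =>
    cases t with
    | nil => simp [List.getLast!]
    | cons z s =>
      rw [getLast!_cons_cons]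
      exact List.mem_cons_of_mem _ (ih (by simp))

lemma getLast!_append (a b : List ℕ) (hb : b ≠ []) : (a ++ b).getLast! = b.getLast! := by
  induction a with
  | nil => rfl
  | cons y t ih =>
    have h1 : t ++ b ≠ [] := by simp [hb]
    cases ht : t ++ b with
    | nil => simp_all
    | cons z s =>
      rw [List.cons_append, ht, getLast!_cons_cons, ← ht, ih]

lemma sum_map_add_one (f : List ℕ → ℕ) (l : List (List ℕ)) :
    (l.map (fun x => f x + 1)).sum = (l.map f).sum + l.length := by
  induction l with
  | nil => simp
  | cons x t ih => simp [ih]; omega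

lemma des_cons_of_lt (m : ℕ) (r : List ℕ) (hr : r ≠ []) (h : m < r.head!) :
    des (m :: r) = des r := by
  cases r with
  | nil => simp at hr
  | cons z s =>
    rw [des_cons_cons]
    have hz : ¬ z < m := by simp [List.head!] at h; omega
    simp [hz]

lemma minDecomp_succ (f : ℕ) (l : List ℕ) :
    minDecomp (f + 1) l =
      .node (l.foldr min (l.headD 0))
        (((maxSplit (l.take (l.idxOf (l.foldr min (l.headD 0)))).length
            (l.take (l.idxOf (l.foldr min (l.headD 0))))).map (minDecomp f))
          ++ (if (l.drop (l.idxOf (l.foldr min (l.headD 0)) + 1)).isEmpty then []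
              else [minDecomp f (l.drop (l.idxOf (l.foldr min (l.headD 0)) + 1))])) := rfl

lemma minDecomp_spec : ∀ N l, l.length ≤ N → l ≠ [] → l.Nodup →
    (∀ x ∈ l, x ≤ l.getLast!) → ∀ fuel, l.length ≤ fuel →
    RTree.nodeCount (minDecomp fuel l) = l.length ∧
    RTree.leafCount (minDecomp fuel l) = des l + 1 := by
  intro N
  induction N with
  | zero =>
    intro l hN hl
    cases l with
    | nil => simp at hl
    | cons x t => simp at hN
  | succ N ih =>
    intro l hN hl hnd hinv fuel hfuel
    obtain ⟨f, rfl⟩ : ∃ f, fuel = f + 1 := by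
      cases fuel with
      | zero => cases l with
        | nil => simp at hl
        | cons x t => simp at hfuel
      | succ f => exact ⟨f, rfl⟩
    set m := l.foldr min (l.headD 0) with hm
    have hhead : l.headD 0 ∈ l := by
      cases l with
      | nil => simp at hl
      | cons x t => simp
    have hmmem : m ∈ l := by
      rcases foldr_min_mem l (l.headD 0) with h | h
      · rw [hm, h]; exact hhead
      · exact h
    have hmmin : ∀ x ∈ l, m ≤ x := foldr_min_le l _
    set i := l.idxOf m with hi
    have hilt : i < l.length := List.idxOf_lt_length_iff.2 hmmem
    have hgetm : l.get ⟨i, hilt⟩ = m := List.idxOf_get hilt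
    set left := l.take i with hleft
    set right := l.drop (i + 1) with hright
    have hldecomp : l = left ++ m :: right := by
      conv_lhs => rw [← List.take_append_drop i l]
      congr 1
      rw [List.drop_eq_getElem_cons hilt]
      congr 1
    have hnd' : (left ++ m :: right).Nodup := hldecomp ▸ hnd
    have hmleft : m ∉ left := fun hc =>
      (List.disjoint_of_nodup_append hnd') hc (List.mem_cons_self)
    have hmright : m ∉ right := by
      have : (m :: right).Nodup := (List.sublist_append_right left _).nodup hnd'
      exact (List.nodup_cons.1 this).1
    have hleftgt : ∀ x ∈ left, m < x := by
      intro x hx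
      have h1 : m ≤ x := hmmin x (hldecomp ▸ List.mem_append_left _ hx)
      have h2 : x ≠ m := fun hc => hmleft (hc ▸ hx)
      omega
    have hrightgt : ∀ x ∈ right, m < x := by
      intro x hx
      have h1 : m ≤ x := hmmin x (hldecomp ▸ List.mem_append_right _ (List.mem_cons_of_mem _ hx))
      have h2 : x ≠ m := fun hc => hmright (hc ▸ hx)
      omega
    have hlen : l.length = left.length + 1 + right.length := by
      conv_lhs => rw [hldecomp]
      simp
      try omega
    have hleftlen : left.length = i := by
      rw [hleft, List.length_take]
      omega
    rw [minDecomp_succ, ← hm, ← hi, ← hleft, ← hright]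
    rcases eq_or_ne right [] with hre | hre
    · -- right empty forces l = [m]
      have hle : left = [] := by
        rcases eq_or_ne left [] with h | h
        · exact h
        · exfalso
          obtain ⟨x, hx⟩ := List.exists_mem_of_ne_nil left h
          have h1 : l.getLast! = m := by
            rw [hldecomp, hre, getLast!_append _ _ (by simp)]
            rfl
          have h2 : x ≤ m := h1 ▸ hinv x (hldecomp ▸ List.mem_append_left _ hx)
          have h3 := hleftgt x hx
          omega
      rw [hle, hre]
      simp only [List.length_nil, maxSplit_nil, List.map_nil, List.isEmpty_nil,
        if_true, List.nil_append]
      have hlm : l = [m] := by rw [hldecomp, hle, hre]; rfl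
      constructor
      · rw [RTree.nodeCount_node]; simp [hlm]
      · rw [RTree.leafCount_node]; simp [hlm, des_single]
    · -- right nonempty
      have hrnd : right.Nodup := (List.drop_sublist _ _).nodup hnd
      have hrinv : ∀ x ∈ right, x ≤ right.getLast! := by
        have hlast : l.getLast! = right.getLast! := by
          conv_lhs => rw [hldecomp, ← List.singleton_append, ← List.append_assoc]
          exact getLast!_append _ _ hre
        intro x hx
        rw [← hlast]
        exact hinv x (hldecomp ▸ List.mem_append_right _ (List.mem_cons_of_mem _ hx))
      have hrlen : right.length ≤ N := by omega
      have hrfuel : right.length ≤ f := by omega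
      obtain ⟨hrnode, hrleaf⟩ := ih right hrlen hre hrnd hrinv f hrfuel
      have hrempty : right.isEmpty = false := by simp [List.isEmpty_iff, hre]
      rw [hrempty]
      simp only [Bool.false_eq_true, if_false]
      rcases eq_or_ne left [] with hle | hle
      · -- no left part: chain node
        rw [hle]
        simp only [List.length_nil, maxSplit_nil, List.map_nil, List.nil_append]
        have hdes : des l = des right := by
          conv_lhs => rw [hldecomp, hle, List.nil_append]
          apply des_cons_of_lt m right hre
          exact hrightgt _ (head!_mem right hre)
        constructor
        · rw [RTree.nodeCount_node]
          simp [hrnode, hlen, hle]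
        · rw [RTree.leafCount_node]
          simp [hrleaf, hdes]
      · -- left part present
        have hlnd : left.Nodup := (List.take_sublist _ _).nodup hnd
        obtain ⟨hms1, hms2, hms3, hms4⟩ :=
          maxSplit_spec left.length left hle hlnd le_rfl
        set bs := maxSplit left.length left with hbs
        -- facts about each block
        have hblock : ∀ c ∈ bs, RTree.nodeCount (minDecomp f c) = c.length ∧
            RTree.leafCount (minDecomp f c) = des c + 1 := by
          intro c hc
          have hsub : c.Sublist left := hms1 ▸ List.sublist_flatten_of_mem hc
          have hclen : c.length ≤ left.length := hsub.length_le
          have hcne : c ≠ [] := (hms3 c hc).1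
          have hcinv : ∀ x ∈ c, x ≤ c.getLast! := (hms3 c hc).2
          have hcnd : c.Nodup := hsub.nodup hlnd
          exact ih c (by omega) hcne hcnd hcinv f (by omega)
        have hnodes : ((bs.map (minDecomp f)).map RTree.nodeCount).sum = left.length := by
          rw [List.map_map]
          have : bs.map (RTree.nodeCount ∘ minDecomp f) = bs.map List.length :=
            List.map_congr_left (fun c hc => (hblock c hc).1)
          rw [this]
          rw [← List.length_flatten, hms1]
        have hleaves : ((bs.map (minDecomp f)).map RTree.leafCount).sum
            = des left + 1 := by
          rw [List.map_map]
          have h1 : bs.map (RTree.leafCount ∘ minDecomp f)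
              = bs.map (fun c => des c + 1) :=
            List.map_congr_left (fun c hc => (hblock c hc).2)
          rw [h1, sum_map_add_one, ← hms4]
        have hdes : des l = des left + 1 + des right := by
          conv_lhs => rw [hldecomp]
          rw [des_append left (m :: right) hle (by simp)]
          have hb1 : (m :: right).head! = m := rfl
          have hb2 : des (m :: right) = des right := by
            apply des_cons_of_lt m right hre
            exact hrightgt _ (head!_mem right hre)
          rw [hb1, hb2, if_pos (hleftgt _ (getLast!_mem left hle))]
        constructor
        · rw [RTree.nodeCount_node]
          rw [List.map_append, List.sum_append, hnodes]
          simp [hrnode, hlen]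
          omega
        · rw [RTree.leafCount_node]
          have hcsne : (bs.map (minDecomp f) ++ [minDecomp f right]).isEmpty = false := by
            simp
          rw [hcsne]
          simp only [Bool.false_eq_true, if_false]
          rw [List.map_append, List.sum_append, hleaves]
          simp [hrleaf, hdes]
          omega

lemma minDecomp_nil (f : ℕ) : minDecomp f [] = .node 0 [] := by
  cases f with
  | zero => rfl
  | succ f => rw [minDecomp_succ]; simp [maxSplit_nil]

lemma headD_mem (l : List ℕ) (h : l ≠ []) : l.headD 0 ∈ l := by
  cases l with
  | nil => simp at h
  | cons x t => simp

lemma foldr_min_eq (l : List ℕ) (a m : ℕ) (ha : a ∈ l) (hm : m ∈ l)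
    (hmin : ∀ x ∈ l, m ≤ x) : l.foldr min a = m := by
  refine le_antisymm (foldr_min_le l a m hm) ?_
  rcases foldr_min_mem l a with h | h
  · rw [h]; exact hmin a ha
  · exact hmin _ h

lemma minDecomp_fuel : ∀ N l, l.length ≤ N → l.Nodup → ∀ f g,
    l.length ≤ f → l.length ≤ g → minDecomp f l = minDecomp g l := by
  intro N
  induction N with
  | zero =>
    intro l hN _ f g _ _
    have : l = [] := List.length_eq_zero_iff.1 (by omega)
    subst this
    rw [minDecomp_nil, minDecomp_nil]
  | succ N ih =>
    intro l hN hnd f g hf hg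
    rcases eq_or_ne l [] with rfl | hl
    · rw [minDecomp_nil, minDecomp_nil]
    · have hlpos : 1 ≤ l.length := List.length_pos_iff.2 hl
      obtain ⟨f', rfl⟩ : ∃ f', f = f' + 1 := ⟨f - 1, by omega⟩
      obtain ⟨g', rfl⟩ : ∃ g', g = g' + 1 := ⟨g - 1, by omega⟩
      rw [minDecomp_succ, minDecomp_succ]
      congr 1
      set m := l.foldr min (l.headD 0) with hm
      set i := l.idxOf m with hi
      set left := l.take i with hleft
      set right := l.drop (i + 1) with hright
      have hhead : l.headD 0 ∈ l := by
        cases l with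
        | nil => simp at hl
        | cons x t => simp
      have hmmem : m ∈ l := by
        rcases foldr_min_mem l (l.headD 0) with h | h
        · rw [hm, h]; exact hhead
        · exact h
      have hilt : i < l.length := List.idxOf_lt_length_iff.2 hmmem
      have hleftlen : left.length = i := by
        rw [hleft, List.length_take]; omega
      have hleftnd : left.Nodup := (List.take_sublist _ _).nodup hnd
      have hrightlen : right.length = l.length - (i + 1) := by
        rw [hright]; simp
      have hrightnd : right.Nodup := (List.drop_sublist _ _).nodup hnd
      congr 1
      · -- blocks
        rcases eq_or_ne left [] with hle | hle
        · rw [hle]; simp [maxSplit_nil]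
        · obtain ⟨hms1, _, hms3, _⟩ := maxSplit_spec left.length left hle hleftnd le_rfl
          apply List.map_congr_left
          intro c hc
          have hsub : c.Sublist left := hms1 ▸ List.sublist_flatten_of_mem hc
          have hclen : c.length ≤ left.length := hsub.length_le
          exact ih c (by omega) (hsub.nodup hleftnd) f' g' (by omega) (by omega)
      · -- right
        rcases eq_or_ne right [] with hre | hre
        · rw [hre]; simp
        · have hrempty : right.isEmpty = false := by simp [List.isEmpty_iff, hre]
          rw [hrempty]
          simp only [Bool.false_eq_true, if_false]
          congr 1
          exact ih right (by omega) hrightnd f' g' (by omega) (by omega)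

lemma minDecomp_chain (f m : ℕ) (rest : List ℕ) (hne : rest ≠ [])
    (hgt : ∀ x ∈ rest, m < x) :
    minDecomp (f + 1) (m :: rest) = .node m [minDecomp f rest] := by
  rw [minDecomp_succ]
  have hmin : (m :: rest).foldr min ((m :: rest).headD 0) = m := by
    apply foldr_min_eq _ _ _ (by simp) (by simp)
    intro x hx
    rcases List.mem_cons.1 hx with h | h
    · omega
    · exact le_of_lt (hgt x h)
  rw [hmin, List.idxOf_cons_self]
  simp [maxSplit_nil, List.isEmpty_iff, hne]

lemma minDecomp_single (f x : ℕ) : minDecomp (f + 1) [x] = .node x [] := by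
  rw [minDecomp_succ]
  have hmin : ([x] : List ℕ).foldr min (([x] : List ℕ).headD 0) = x := by simp
  rw [hmin, List.idxOf_cons_self]
  simp [maxSplit_nil]

lemma maxSplit_decreasing : ∀ (xs : List ℕ), xs.Pairwise (· > ·) → ∀ f, xs.length ≤ f →
    maxSplit f xs = xs.map (fun x => [x]) := by
  intro xs
  induction xs with
  | nil => intro _ f _; rw [maxSplit_nil]; simp
  | cons x t ih =>
    intro hp f hf
    have hf2 : t.length + 1 ≤ f := by simpa using hf
    obtain ⟨f', rfl⟩ : ∃ f', f = f' + 1 := ⟨f - 1, by omega⟩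
    have hxt : ∀ y ∈ t, y < x := fun y hy => (List.pairwise_cons.1 hp).1 y hy
    have hmax : (x :: t).foldr max 0 = x := by
      refine le_antisymm ?_ (foldr_max_ge _ x (by simp))
      have := foldr_max_mem (x :: t) (by simp)
      rcases List.mem_cons.1 this with h | h
      · omega
      · exact le_of_lt (hxt _ h)
    rw [maxSplit_cons, hmax, List.idxOf_cons_self]
    simp only [List.take_zero, List.take_succ_cons, List.take_zero,
      List.drop_succ_cons, List.drop_zero, List.map_cons]
    rw [ih (List.pairwise_cons.1 hp).2 f' (by simp at hf ⊢; omega)]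

lemma indexOf_append_cons (xs : List ℕ) (m : ℕ) (r : List ℕ) (h : m ∉ xs) :
    (xs ++ m :: r).idxOf m = xs.length := by
  induction xs with
  | nil => simp [List.idxOf_cons_self]
  | cons x t ih =>
    have hxm : x ≠ m := fun hc => h (hc ▸ List.mem_cons_self)
    rw [List.cons_append, List.idxOf_cons_ne _ (by omega : x ≠ m), ih (fun hc => h (List.mem_cons_of_mem _ hc))]
    simp

lemma minDecomp_bottom (g : ℕ) (xs : List ℕ) (m M : ℕ) (hxs : xs ≠ [])
    (hp : xs.Pairwise (· > ·)) (hm : ∀ x ∈ xs, m < x) (hM : m < M)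
    (hlen : xs.length ≤ g + 1) :
    minDecomp (g + 1 + 1) (xs ++ m :: [M]) =
      .node m ((xs.map fun x => .node x []) ++ [.node M []]) := by
  rw [minDecomp_succ]
  set l := xs ++ m :: [M] with hl
  have hmmem : m ∈ l := by rw [hl]; simp
  have hmnotin : m ∉ xs := fun hc => by have := hm m hc; omega
  have hmin : l.foldr min (l.headD 0) = m := by
    apply foldr_min_eq _ _ _ (headD_mem l (by rw [hl]; simp)) hmmem ?_
    intro x hx
    rw [hl] at hx
    rcases List.mem_append.1 hx with h | h
    · exact le_of_lt (hm x h)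
    · rcases List.mem_cons.1 h with h' | h'
      · omega
      · simp at h'; omega
  have hidx : l.idxOf m = xs.length := indexOf_append_cons xs m [M] hmnotin
  rw [hmin, hidx]
  have htake : l.take xs.length = xs := by rw [hl]; simp
  have hdrop : l.drop (xs.length + 1) = [M] := by
    rw [hl]
    rw [show xs ++ m :: [M] = (xs ++ [m]) ++ [M] by simp]
    rw [show xs.length + 1 = (xs ++ [m]).length by simp]
    exact List.drop_left
  rw [htake, hdrop]
  rw [maxSplit_decreasing xs hp xs.length le_rfl]
  simp only [List.isEmpty_cons, Bool.false_eq_true, if_false]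
  congr 1
  rw [List.map_map]
  congr 1
  · apply List.map_congr_left
    intro x _
    exact minDecomp_single g x
  · rw [minDecomp_single]


lemma chain_calc : ∀ (c : ℕ) (a f : ℕ) (B : List ℕ), B ≠ [] → B.Nodup →
    (∀ x ∈ B, a + c < x) → c + B.length ≤ f →
    RTree.leafCount (minDecomp f ((List.range c).map (fun j => a + 1 + j) ++ B)) =
      RTree.leafCount (minDecomp B.length B) ∧
    RTree.incidenceSum (minDecomp f ((List.range c).map (fun j => a + 1 + j) ++ B)) =
      c * RTree.leafCount (minDecomp B.length B) + RTree.incidenceSum (minDecomp B.length B) := by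
  intro c
  induction c with
  | zero =>
    intro a f B hB hnd _ hf
    simp only [List.range_zero, List.map_nil, List.nil_append, Nat.zero_mul, Nat.zero_add]
    rw [minDecomp_fuel B.length B le_rfl hnd f B.length (by omega) le_rfl]
    exact ⟨rfl, rfl⟩
  | succ c ih =>
    intro a f B hB hnd hgt hf
    obtain ⟨f', rfl⟩ : ∃ f', f = f' + 1 := ⟨f - 1, by omega⟩
    have hpref : (List.range (c + 1)).map (fun j => a + 1 + j) =
        (a + 1) :: (List.range c).map (fun j => (a + 1) + 1 + j) := by
      rw [List.range_succ_eq_map, List.map_cons, List.map_map]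
      congr 1
      apply List.map_congr_left
      intro j _
      simp [Nat.succ_eq_add_one]
      omega
    rw [hpref, List.cons_append]
    set rest := (List.range c).map (fun j => (a + 1) + 1 + j) ++ B with hrest
    have hrne : rest ≠ [] := by
      rw [hrest]
      intro hc
      rcases List.append_eq_nil_iff.1 hc with ⟨_, h2⟩
      exact hB h2
    have hrgt : ∀ x ∈ rest, a + 1 < x := by
      intro x hx
      rw [hrest] at hx
      rcases List.mem_append.1 hx with h | h
      · obtain ⟨j, _, rfl⟩ := List.mem_map.1 h
        omega
      · have := hgt x h
        omega
    rw [minDecomp_chain f' (a + 1) rest hrne hrgt]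
    have hlen : c + B.length ≤ f' := by
      have : rest.length = c + B.length := by rw [hrest]; simp
      omega
    obtain ⟨ihl, ihi⟩ := ih (a + 1) f' B hB hnd (fun x hx => by have := hgt x hx; omega) hlen
    have hleaf : RTree.leafCount (.node (a+1) [minDecomp f' rest]) =
        RTree.leafCount (minDecomp f' rest) := by
      rw [RTree.leafCount_node]; simp
    have hinc : RTree.incidenceSum (.node (a+1) [minDecomp f' rest]) =
        RTree.leafCount (minDecomp f' rest) + RTree.incidenceSum (minDecomp f' rest) := by
      rw [RTree.incidenceSum_node, hleaf]; simp
    constructor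
    · rw [hleaf, ihl]
    · rw [hinc, ihl, ihi, Nat.succ_mul]
      ring


lemma des_ofFn : ∀ (k : ℕ) (g : Fin k → ℕ),
    des (List.ofFn g) = (Finset.univ.filter fun i : Fin k =>
      ∃ h : (i : ℕ) + 1 < k, g ⟨(i : ℕ) + 1, h⟩ < g i).card := by
  intro k
  induction k with
  | zero => intro g; simp [des]
  | succ k ih =>
    intro g
    cases k with
    | zero =>
      rw [show List.ofFn g = [g 0] by simp [List.ofFn_succ]]
      rw [des_single]
      symm
      rw [Finset.card_eq_zero, Finset.filter_eq_empty_iff]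
      rintro i - ⟨h, -⟩
      omega
    | succ k =>
      set gs : Fin (k + 1) → ℕ := fun i => g i.succ with hgs
      have h1 : List.ofFn g = g 0 :: List.ofFn gs := by
        rw [List.ofFn_succ]
      have h2 : List.ofFn gs = gs 0 :: List.ofFn (fun i => gs i.succ) := by
        rw [List.ofFn_succ]
      rw [h1, h2, des_cons_cons, ← h2, ih gs]
      rw [Finset.card_filter, Finset.card_filter]
      conv_rhs => rw [Fin.sum_univ_succ]
      have he0 : ∀ (h : ((0 : Fin (k + 2)) : ℕ) + 1 < k + 2),
          g ⟨((0 : Fin (k + 2)) : ℕ) + 1, h⟩ = gs 0 := by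
        intro h
        have hfin : (⟨((0 : Fin (k + 2)) : ℕ) + 1, h⟩ : Fin (k + 2)) = Fin.succ 0 := by
          ext; simp
        rw [hfin]
        try rfl
      congr 1
      · -- head term
        have hlt : ((0 : Fin (k + 2)) : ℕ) + 1 < k + 2 := by simp
        have hiff : (gs 0 < g 0) ↔ (∃ h : ((0 : Fin (k + 2)) : ℕ) + 1 < k + 2,
            g ⟨((0 : Fin (k + 2)) : ℕ) + 1, h⟩ < g 0) := by
          constructor
          · intro hv
            exact ⟨hlt, by rw [he0 hlt]; exact hv⟩
          · rintro ⟨h, hv⟩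
            rw [he0 h] at hv
            exact hv
        rw [if_congr hiff rfl rfl]
      · apply Finset.sum_congr rfl
        intro i _
        apply if_congr ?_ rfl rfl
        constructor
        · rintro ⟨h, hv⟩
          have h2' : ((i.succ : Fin (k + 2)) : ℕ) + 1 < k + 2 := by
            have := i.isLt
            simp [Fin.val_succ]
            omega
          refine ⟨h2', ?_⟩
          have hv' : g (Fin.succ ⟨(i : ℕ) + 1, h⟩) < g i.succ := hv
          have hfin : Fin.succ ⟨(i : ℕ) + 1, h⟩
              = (⟨((i.succ : Fin (k + 2)) : ℕ) + 1, h2'⟩ : Fin (k + 2)) := by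
            ext; simp [Fin.val_succ]
          rw [hfin] at hv'
          exact hv'
        · rintro ⟨h, hv⟩
          have h' : (i : ℕ) + 1 < k + 1 := by
            have := i.isLt
            simp [Fin.val_succ] at h
            omega
          refine ⟨h', ?_⟩
          show g (Fin.succ ⟨(i : ℕ) + 1, h'⟩) < g i.succ
          have hfin : Fin.succ ⟨(i : ℕ) + 1, h'⟩
              = (⟨((i.succ : Fin (k + 2)) : ℕ) + 1, h⟩ : Fin (k + 2)) := by
            ext; simp [Fin.val_succ]
          rw [hfin]
          exact hv

lemma des_permWord {n : ℕ} (hn : 1 ≤ n) (σ : Equiv.Perm (Fin n)) :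
    des (permWord σ) = numDescents σ := by
  unfold permWord numDescents
  have hofn : (List.ofFn fun i : Fin n => (σ i : ℕ) + 1) ≠ [] := by
    simp
    omega
  rw [des_append _ _ hofn (by simp)]
  have hmem := getLast!_mem _ hofn
  obtain ⟨j, hj⟩ := List.mem_ofFn.1 hmem
  have hjle : (List.ofFn fun i : Fin n => (σ i : ℕ) + 1).getLast! ≤ n := by
    rw [← hj]
    exact (σ j).isLt
  have hbound : (if ([n+1] : List ℕ).head! <
      (List.ofFn fun i : Fin n => (σ i : ℕ) + 1).getLast! then 1 else 0) = 0 := by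
    apply if_neg
    have h3 : ([n+1] : List ℕ).head! = n + 1 := rfl
    rw [h3]
    omega
  rw [hbound, des_single, des_ofFn]
  have : ∀ i : Fin n, (∃ h : (i : ℕ) + 1 < n, (σ ⟨(i : ℕ) + 1, h⟩ : ℕ) + 1 < (σ i : ℕ) + 1)
      ↔ (∃ h : (i : ℕ) + 1 < n, σ ⟨(i : ℕ) + 1, h⟩ < σ i) := by
    intro i
    constructor
    · rintro ⟨h, hv⟩
      exact ⟨h, by rw [Fin.lt_def]; omega⟩
    · rintro ⟨h, hv⟩
      rw [Fin.lt_def] at hv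
      exact ⟨h, by omega⟩
  rw [Finset.filter_congr (fun i _ => this i)]
  omega


lemma permWord_length {n : ℕ} (σ : Equiv.Perm (Fin n)) : (permWord σ).length = n + 1 := by
  simp [permWord]

lemma permWord_ne_nil {n : ℕ} (σ : Equiv.Perm (Fin n)) : permWord σ ≠ [] := by
  simp [permWord]

lemma permWord_nodup {n : ℕ} (σ : Equiv.Perm (Fin n)) : (permWord σ).Nodup := by
  unfold permWord
  rw [List.nodup_append]
  refine ⟨?_, List.nodup_singleton _, ?_⟩
  · rw [List.nodup_ofFn]
    intro a b hab
    simp only at hab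
    have : (σ a : ℕ) = (σ b : ℕ) := by omega
    exact σ.injective (Fin.ext this)
  · intro x hx
    obtain ⟨i, hi⟩ := List.mem_ofFn.1 hx
    have hi' : (σ i : ℕ) + 1 = x := hi
    have := (σ i).isLt
    simp only [List.mem_singleton]
    omega

lemma permWord_getLast {n : ℕ} (σ : Equiv.Perm (Fin n)) : (permWord σ).getLast! = n + 1 :=
  getLast!_append_singleton _ _

lemma permWord_le {n : ℕ} (σ : Equiv.Perm (Fin n)) :
    ∀ x ∈ permWord σ, x ≤ (permWord σ).getLast! := by
  intro x hx
  rw [permWord_getLast]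
  unfold permWord at hx
  rcases List.mem_append.1 hx with h | h
  · obtain ⟨i, hi⟩ := List.mem_ofFn.1 h
    have hi' : (σ i : ℕ) + 1 = x := hi
    have := (σ i).isLt
    omega
  · simp at h
    omega

lemma permWord_leaf_node {n : ℕ} (σ : Equiv.Perm (Fin n)) (hn : 1 ≤ n) :
    RTree.nodeCount (permTree σ) = n + 1 ∧
    RTree.leafCount (permTree σ) = numDescents σ + 1 := by
  have h := minDecomp_spec (permWord σ).length (permWord σ) le_rfl (permWord_ne_nil σ)
    (permWord_nodup σ) (permWord_le σ) (permWord σ).length le_rfl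
  rw [des_permWord hn σ] at h
  obtain ⟨h1, h2⟩ := h
  constructor
  · show RTree.nodeCount (minDecomp (permWord σ).length (permWord σ)) = n + 1
    rw [h1, permWord_length]
  · exact h2


lemma sum_map_one {α : Type*} (l : List α) : (l.map fun _ => (1:ℕ)).sum = l.length := by
  induction l with
  | nil => rfl
  | cons x t ih =>
    simp [ih]
    omega

/-- The extremal permutation: identity on `[0, n-d-1)`, reversing on `[n-d-1, n)`. -/
def maxPermFun (n d : ℕ) : Fin n → Fin n := fun i =>
  if (i : ℕ) < n - d - 1 then i
  else if h2 : 2 * n - d - 2 - (i : ℕ) < n then ⟨2 * n - d - 2 - (i : ℕ), h2⟩ else i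

lemma maxPermFun_val {n d : ℕ} (hd : 1 ≤ d) (hn : d + 1 ≤ n) (i : Fin n) :
    (maxPermFun n d i : ℕ) =
      if (i : ℕ) < n - d - 1 then (i : ℕ) else 2 * n - d - 2 - (i : ℕ) := by
  have hlt := i.isLt
  unfold maxPermFun
  by_cases h1 : (i : ℕ) < n - d - 1
  · rw [if_pos h1, if_pos h1]
  · rw [if_neg h1, if_neg h1]
    have h2 : 2 * n - d - 2 - (i : ℕ) < n := by omega
    rw [dif_pos h2]

lemma maxPermFun_inv {n d : ℕ} (hd : 1 ≤ d) (hn : d + 1 ≤ n) :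
    Function.Involutive (maxPermFun n d) := by
  intro i
  have hlt := i.isLt
  apply Fin.ext
  rw [maxPermFun_val hd hn, maxPermFun_val hd hn i]
  by_cases h1 : (i : ℕ) < n - d - 1
  · rw [if_pos h1, if_pos h1]
  · rw [if_neg h1]
    have hv : ¬ (2 * n - d - 2 - (i : ℕ) < n - d - 1) := by omega
    rw [if_neg hv]
    omega

/-- For `d ≥ 1` and `n ≥ d + 1`, the maximum weight of a permutation of length `n` with
`d` descents is `d(n - d - 1)`: every such permutation has weight at most `d(n-d-1)`,
and this bound is attained. -/
theorem max_weight_permutation (n d : ℕ) (hd : 1 ≤ d) (hn : d + 1 ≤ n) :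
    (∀ σ : Equiv.Perm (Fin n), numDescents σ = d → permWeight σ ≤ d * (n - d - 1)) ∧
    (∃ σ : Equiv.Perm (Fin n), numDescents σ = d ∧ permWeight σ = d * (n - d - 1)) := by
  have hn1 : 1 ≤ n := by omega
  constructor
  · intro σ hσ
    obtain ⟨hnode, hleaf⟩ := permWord_leaf_node σ hn1
    rw [hσ] at hleaf
    obtain ⟨-, -, hfact⟩ := RTree.tree_facts (permTree σ)
    rw [hnode, hleaf] at hfact
    obtain ⟨k, hk⟩ : ∃ k, n = d + 1 + k := ⟨n - d - 1, by omega⟩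
    have hprod : (n + 1) * (d + 1) = (d + 1) * (d + 1) + (d * k + n) := by
      subst hk; ring
    have hineq : RTree.incidenceSum (permTree σ) ≤ d * k + n := by
      rw [hprod] at hfact
      omega
    have hnk : n - d - 1 = k := by omega
    rw [hnk]
    unfold permWeight
    omega
  · -- existence
    set σ := Function.Involutive.toPerm (maxPermFun n d) (maxPermFun_inv hd hn) with hσdef
    have hσval : ∀ i : Fin n, (σ i : ℕ) =
        if (i : ℕ) < n - d - 1 then (i : ℕ) else 2 * n - d - 2 - (i : ℕ) := by
      intro i
      rw [hσdef]
      rw [show (Function.Involutive.toPerm (maxPermFun n d) (maxPermFun_inv hd hn)) i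
        = maxPermFun n d i from rfl]
      exact maxPermFun_val hd hn i
    set pref := (List.range (n - d - 1)).map (fun j => 0 + 1 + j) with hpref
    set xs := (List.range d).map (fun j => n - j) with hxs
    set B := xs ++ (n - d) :: [n + 1] with hB
    have hxslen : xs.length = d := by rw [hxs]; simp
    have hpreflen : pref.length = n - d - 1 := by rw [hpref]; simp
    have hBlen : B.length = d + 2 := by rw [hB]; simp [hxslen]
    have hofn : (List.ofFn fun i : Fin n => ((σ i : ℕ) + 1)) = pref ++ (xs ++ [n - d]) := by
      apply List.ext_getElem
      · simp [hpreflen, hxslen]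
        omega
      · intro i h1 h2
        have hi : i < n := by simpa using h1
        have hσval' : ∀ (j : ℕ) (hj : j < n), ((σ ⟨j, hj⟩ : ℕ)) =
            if j < n - d - 1 then j else 2 * n - d - 2 - j := by
          intro j hj
          rw [hσval ⟨j, hj⟩]
        rw [List.getElem_ofFn]
        rw [List.getElem_append h2]
        rw [hσval']
        by_cases hc1 : i < n - d - 1
        · rw [dif_pos (by omega : i < pref.length), if_pos hc1]
          simp only [hpref, List.getElem_map, List.getElem_range]
          omega
        · rw [dif_neg (by omega : ¬ i < pref.length), if_neg hc1]
          rw [List.getElem_append]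
          by_cases hc2 : i < n - 1
          · rw [dif_pos (by simp [hxslen, hpreflen]; omega : i - pref.length < xs.length)]
            simp only [hxs, List.getElem_map, List.getElem_range]
            simp only [hpreflen]
            omega
          · rw [dif_neg (by simp [hxslen, hpreflen]; omega : ¬ i - pref.length < xs.length)]
            have h0 : i - pref.length - xs.length = 0 := by
              rw [hpreflen, hxslen]
              omega
            simp only [h0, List.getElem_cons_zero]
            simp only [hpreflen, hxslen] at h0
            omega
    have hword : permWord σ = pref ++ B := by
      unfold permWord
      rw [hofn, hB]
      simp [List.append_assoc]
    -- properties of B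
    have hBne : B ≠ [] := by rw [hB]; simp
    have hBnodup : B.Nodup := by
      have h := permWord_nodup σ
      rw [hword] at h
      exact (List.sublist_append_right pref B).nodup h
    have hBgt : ∀ x ∈ B, 0 + (n - d - 1) < x := by
      intro x hx
      rw [hB] at hx
      rcases List.mem_append.1 hx with h | h
      · rw [hxs] at h
        obtain ⟨j, hj, rfl⟩ := List.mem_map.1 h
        simp at hj
        omega
      · simp at h
        rcases h with h | h <;> omega
    -- bottom tree
    have hxsne : xs ≠ [] := by
      rw [hxs]
      simp
      omega
    have hxsp : xs.Pairwise (· > ·) := by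
      rw [hxs, List.pairwise_map, List.pairwise_iff_getElem]
      intro a b ha hb hab
      simp only [List.getElem_range]
      simp only [List.length_range] at ha hb
      omega
    have hxsm : ∀ x ∈ xs, n - d < x := by
      intro x hx
      rw [hxs] at hx
      obtain ⟨j, hj, rfl⟩ := List.mem_map.1 hx
      simp at hj
      omega
    have hbot : minDecomp B.length B =
        .node (n - d) ((xs.map fun x => .node x []) ++ [.node (n + 1) []]) := by
      rw [hBlen]
      rw [show d + 2 = d + 1 + 1 from rfl]
      exact minDecomp_bottom d xs (n - d) (n + 1) hxsne hxsp hxsm (by omega) (by omega)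
    have hleaf1 : ∀ x : ℕ, RTree.leafCount (.node x []) = 1 := by
      intro x
      rw [RTree.leafCount_node]
      simp
    have hinc0 : ∀ x : ℕ, RTree.incidenceSum (.node x []) = 0 := by
      intro x
      rw [RTree.incidenceSum_node]
      simp
    have hleafB : RTree.leafCount (minDecomp B.length B) = d + 1 := by
      rw [hbot, RTree.leafCount_node]
      rw [if_neg (by simp)]
      rw [List.map_append, List.sum_append, List.map_map]
      have : xs.map (RTree.leafCount ∘ fun x => RTree.node x []) = xs.map (fun _ => 1) :=
        List.map_congr_left (fun x _ => hleaf1 x)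
      rw [this, sum_map_one, hxslen]
      simp [hleaf1]
    have hincB : RTree.incidenceSum (minDecomp B.length B) = d + 1 := by
      have hleafB' : RTree.leafCount
          (.node (n - d) ((xs.map fun x => .node x []) ++ [.node (n + 1) []])) = d + 1 := by
        rw [← hbot]
        exact hleafB
      rw [hbot, RTree.incidenceSum_node]
      rw [if_neg (by simp)]
      rw [hleafB']
      rw [List.map_append, List.sum_append, List.map_map]
      have h0 : xs.map (RTree.incidenceSum ∘ fun x => RTree.node x [])
          = xs.map (fun _ => (0:ℕ)) :=
        List.map_congr_left (fun x _ => hinc0 x)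
      rw [h0]
      simp [hinc0]
    -- chain
    have hchain := chain_calc (n - d - 1) 0 (n + 1) B hBne hBnodup hBgt (by omega)
    have htree : permTree σ = minDecomp (n + 1) (pref ++ B) := by
      unfold permTree
      rw [hword, hpref]
      congr 1
      rw [← hpref, ← hword, permWord_length]
    obtain ⟨hcl, hci⟩ := hchain
    have hleafW : RTree.leafCount (permTree σ) = d + 1 := by
      rw [htree, hpref, hcl, hleafB]
    have hincW : RTree.incidenceSum (permTree σ) = (n - d - 1) * (d + 1) + (d + 1) := by
      rw [htree, hpref, hci, hleafB, hincB]
    -- descents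
    have hdes : numDescents σ = d := by
      have h := (permWord_leaf_node σ (by omega)).2
      rw [hleafW] at h
      omega
    refine ⟨σ, hdes, ?_⟩
    unfold permWeight
    rw [hincW]
    obtain ⟨k, hk⟩ : ∃ k, n = d + 1 + k := ⟨n - d - 1, by omega⟩
    have h1 : n - d - 1 = k := by omega
    rw [h1]
    have h2 : k * (d + 1) + (d + 1) = d * k + n := by
      subst hk
      ring
    rw [h2]
    omega
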